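/- Let f_1,…,f_k : ℝ^n → ℝ be continuously differentiable and let x ∈ ℝ^n. Let α̂ ∈ ℝ^k be a minimizer of α ↦ ‖∑_{i=1}^k α_i ∇f_i(x)‖₂² over the standard simplex {α ∈ ℝ^k : α_i ≥ 0 for all i, ∑_{i=1}^k α_i = 1}, and set q(x) = ∑_{i=1}^k α̂_i ∇f_i(x). Then ⟨∇f_i(x), q(x)⟩ ≥ ‖q(x)‖₂² for every i = 1,…,k; in particular, if q(x) ≠ 0 then ⟨∇f_i(x), −q(x)⟩ < 0 for all i, i.e. −q(x) is a descent direction for all objective functions f_1,…,f_k simultaneously at x. -/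

import Mathlib

/-- If `α̂` minimizes `‖∑ αᵢ ∇fᵢ(x)‖²` over the standard simplex and
`q = ∑ α̂ᵢ ∇fᵢ(x)`, then `⟨∇fᵢ(x), q⟩ ≥ ‖q‖²` for every `i`; in particular,
if `q ≠ 0` then `-q` is a descent direction for all `fᵢ` at `x`. -/
theorem stmt_0 {n k : ℕ} (f : Fin k → EuclideanSpace ℝ (Fin n) → ℝ)
    (hf : ∀ i, ContDiff ℝ 1 (f i)) (x : EuclideanSpace ℝ (Fin n))
    (αh : Fin k → ℝ) (hmem : αh ∈ stdSimplex ℝ (Fin k))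
    (hmin : ∀ α ∈ stdSimplex ℝ (Fin k),
      ‖∑ i, αh i • gradient (f i) x‖ ^ 2 ≤ ‖∑ i, α i • gradient (f i) x‖ ^ 2)
    (q : EuclideanSpace ℝ (Fin n)) (hq : q = ∑ i, αh i • gradient (f i) x) :
    (∀ i, ‖q‖ ^ 2 ≤ (inner ℝ (gradient (f i) x) q : ℝ)) ∧
      (q ≠ 0 → ∀ i, (inner ℝ (gradient (f i) x) (-q) : ℝ) < 0) := by
  set g : Fin k → EuclideanSpace ℝ (Fin n) := fun i => gradient (f i) x with hg
  have key : ∀ i, 0 ≤ (inner ℝ q (g i - q) : ℝ) := by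
    intro i
    by_contra hcon
    push_neg at hcon
    set c : ℝ := (inner ℝ q (g i - q) : ℝ) with hc
    set d : ℝ := ‖g i - q‖ ^ 2 with hd
    have hd0 : 0 ≤ d := sq_nonneg _
    have hstep : ∀ t : ℝ, 0 < t → t ≤ 1 → 0 ≤ 2 * t * c + t ^ 2 * d := by
      intro t ht0 ht1
      set α : Fin k → ℝ := fun j => (1 - t) * αh j + t * (if j = i then 1 else 0) with hα
      have hmem' : α ∈ stdSimplex ℝ (Fin k) := by
        constructor
        · intro j
          have h1 : (0:ℝ) ≤ (1 - t) * αh j := mul_nonneg (by linarith) (hmem.1 j)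
          have h2 : (0:ℝ) ≤ t * (if j = i then 1 else 0) := by
            apply mul_nonneg ht0.le
            split <;> norm_num
          simpa [hα] using add_nonneg h1 h2
        · simp only [hα]
          rw [Finset.sum_add_distrib, ← Finset.mul_sum, ← Finset.mul_sum, hmem.2]
          simp
      have hsum : ∑ j, α j • g j = q + t • (g i - q) := by
        simp only [hα, add_smul, mul_smul]
        rw [Finset.sum_add_distrib, ← Finset.smul_sum, ← Finset.smul_sum]
        have : ∑ j, (if j = i then (1:ℝ) else 0) • g j = g i := by
          simp [Finset.sum_ite_eq']
        rw [this, hq]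
        rw [smul_sub, sub_smul, one_smul]
        abel
      have hle := hmin α hmem'
      rw [show (∑ j, α j • gradient (f j) x) = ∑ j, α j • g j from rfl, hsum, ← hq] at hle
      have hexp : ‖q + t • (g i - q)‖ ^ 2 = ‖q‖ ^ 2 + 2 * t * c + t ^ 2 * d := by
        rw [@norm_add_sq_real, real_inner_smul_right, norm_smul, mul_pow]
        have : |t| = t := abs_of_pos ht0
        simp only [Real.norm_eq_abs, this]
        ring
      rw [hexp] at hle
      linarith
    rcases eq_or_lt_of_le hd0 with hdeq | hdpos
    · have := hstep 1 one_pos le_rfl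
      nlinarith
    · set t : ℝ := min 1 (-c / d) with ht
      have ht0 : 0 < t := lt_min one_pos (div_pos (by linarith) hdpos)
      have ht1 : t ≤ 1 := min_le_left _ _
      have ht2 : t ≤ -c / d := min_le_right _ _
      have htd : t * d ≤ -c := by
        rw [div_eq_mul_inv] at ht2
        calc t * d ≤ (-c * d⁻¹) * d := by nlinarith
          _ = -c := by field_simp
      have := hstep t ht0 ht1
      nlinarith
  have h1 : ∀ i, ‖q‖ ^ 2 ≤ (inner ℝ (gradient (f i) x) q : ℝ) := by
    intro i
    have := key i
    rw [inner_sub_right, real_inner_self_eq_norm_sq] at this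
    have hcomm : (inner ℝ q (g i) : ℝ) = inner ℝ (gradient (f i) x) q := real_inner_comm _ _
    linarith
  refine ⟨h1, fun hq0 i => ?_⟩
  have hpos : 0 < ‖q‖ ^ 2 := pow_pos (norm_pos_iff.mpr hq0) 2
  have := h1 i
  rw [inner_neg_right]
  linarith
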